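/- The operators ρP, ρR satisfy the relations ρR ∘ ρR* = q¹² ρP² − q⁴(1+q⁴) ρP + 1 and ρR* ∘ ρR = q⁻⁴ ρP² − (1+q⁻⁴) ρP + 1, where * denotes the Hilbert-space adjoint and 1 the identity operator. -/

import Mathlib

open scoped InnerProductSpace in
lemma vec_ext_aux {H : Type*} [NormedAddCommGroup H] [InnerProductSpace ℂ H] [CompleteSpace H]
    (e : HilbertBasis ℕ ℂ H) {x y : H} (h : ∀ i, ⟪e i, x⟫_ℂ = ⟪e i, y⟫_ℂ) : x = y := by
  apply e.repr.injective
  ext i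
  rw [e.repr_apply_apply, e.repr_apply_apply, h i]

set_option maxRecDepth 8000 in
open ContinuousLinearMap in
/-- The operators `ρP, ρR` on `ℓ²(ℕ)` satisfy
`ρR ρR* = q¹² ρP² - q⁴(1+q⁴) ρP + 1` and `ρR* ρR = q⁻⁴ ρP² - (1+q⁻⁴) ρP + 1`. -/
theorem stmt2 {H : Type*} [NormedAddCommGroup H] [InnerProductSpace ℂ H] [CompleteSpace H]
    (e : HilbertBasis ℕ ℂ H) (q : ℝ) (hq0 : 0 < q) (hq1 : q < 1)
    (ρP ρT ρR : H →L[ℂ] H)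
    (hP : ∀ k : ℕ, ρP (e k) = ((q ^ (4 * k) : ℝ) : ℂ) • e k)
    (hT0 : ρT (e 0) = 0)
    (hT : ∀ k : ℕ, ρT (e (k + 1)) =
      ((q ^ (2 * k) * Real.sqrt (1 - q ^ (4 * (k + 1))) : ℝ) : ℂ) • e k)
    (hR0 : ρR (e 0) = 0) (hR1 : ρR (e 1) = 0)
    (hR : ∀ k : ℕ, ρR (e (k + 2)) =
      ((Real.sqrt ((1 - q ^ (4 * (k + 2))) * (1 - q ^ (4 * (k + 1)))) : ℝ) : ℂ) • e k) :
    ρR * adjoint ρR =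
      ((q : ℂ) ^ 12) • ρP ^ 2 - ((q : ℂ) ^ 4 * (1 + (q : ℂ) ^ 4)) • ρP + 1 ∧
    adjoint ρR * ρR =
      (((q : ℂ) ^ 4)⁻¹) • ρP ^ 2 - (1 + ((q : ℂ) ^ 4)⁻¹) • ρP + 1 := by
  have hqn : ∀ n : ℕ, 0 < n → 0 ≤ 1 - q ^ n := by
    intro n hn
    have : q ^ n ≤ 1 := pow_le_one₀ hq0.le hq1.le
    linarith
  have hc2 : ∀ k : ℕ,
      (Real.sqrt ((1 - q ^ (4 * (k + 2))) * (1 - q ^ (4 * (k + 1)))) : ℝ) ^ 2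
        = (1 - q ^ (4 * (k + 2))) * (1 - q ^ (4 * (k + 1))) := by
    intro k
    exact Real.sq_sqrt (mul_nonneg (hqn _ (by omega)) (hqn _ (by omega)))
  have hq4 : ((q : ℂ) ^ 4) ≠ 0 := pow_ne_zero _ (by exact_mod_cast hq0.ne')
  have horth := orthonormal_iff_ite.mp e.orthonormal
  have hadj : ∀ k : ℕ, adjoint ρR (e k)
      = ((Real.sqrt ((1 - q ^ (4 * (k + 2))) * (1 - q ^ (4 * (k + 1)))) : ℝ) : ℂ) • e (k + 2) := by
    intro k
    apply vec_ext_aux e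
    intro m
    rw [inner_smul_right, ContinuousLinearMap.adjoint_inner_right]
    match m with
    | 0 => simp [hR0, horth]
    | 1 => simp [hR1, horth]
    | (j + 2) =>
      rw [hR j, inner_smul_left]
      simp only [horth, Complex.conj_ofReal]
      by_cases h : j = k <;> simp [h]
  have hdense : Dense ((Submodule.span ℂ (Set.range e) : Submodule ℂ H) : Set H) :=
    Submodule.dense_iff_topologicalClosure_eq_top.mpr e.dense_span
  have hext : ∀ (A B : H →L[ℂ] H), (∀ k, A (e k) = B (e k)) → A = B := by
    intro A B h
    refine ContinuousLinearMap.ext_on hdense ?_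
    rintro x ⟨k, rfl⟩
    exact h k
  have hnn : ∀ k : ℕ, 0 ≤ (1 - q ^ (4 * (k + 2))) * (1 - q ^ (4 * (k + 1))) := fun k =>
    mul_nonneg (hqn _ (by omega)) (hqn _ (by omega))
  constructor
  · apply hext
    intro k
    simp only [ContinuousLinearMap.mul_apply, ContinuousLinearMap.add_apply,
      ContinuousLinearMap.sub_apply, ContinuousLinearMap.smul_apply,
      ContinuousLinearMap.one_apply, pow_two, hadj, hR, hP, map_smul, smul_smul]
    match_scalars
    rw [← Complex.ofReal_mul, Real.mul_self_sqrt (hnn k)]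
    push_cast
    ring
  · apply hext
    intro k
    match k with
    | 0 =>
      simp only [ContinuousLinearMap.mul_apply, ContinuousLinearMap.add_apply,
        ContinuousLinearMap.sub_apply, ContinuousLinearMap.smul_apply,
        ContinuousLinearMap.one_apply, pow_two, hR0, hP, map_smul, map_zero, smul_smul]
      match_scalars
      push_cast
      field_simp
      ring
    | 1 =>
      simp only [ContinuousLinearMap.mul_apply, ContinuousLinearMap.add_apply,
        ContinuousLinearMap.sub_apply, ContinuousLinearMap.smul_apply,
        ContinuousLinearMap.one_apply, pow_two, hR1, hP, map_smul, map_zero, smul_smul]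
      match_scalars
      push_cast
      field_simp
      linear_combination (mul_one_div_cancel hq4)
    | (j + 2) =>
      simp only [ContinuousLinearMap.mul_apply, ContinuousLinearMap.add_apply,
        ContinuousLinearMap.sub_apply, ContinuousLinearMap.smul_apply,
        ContinuousLinearMap.one_apply, pow_two, hR, hadj, hP, map_smul, smul_smul]
      match_scalars
      rw [← Complex.ofReal_mul, Real.mul_self_sqrt (hnn j)]
      field_simp
      push_cast
      have hinv : (q : ℂ) ^ 4 * ((q : ℂ)⁻¹) ^ 4 = 1 := by
        rw [← mul_pow, mul_inv_cancel₀ (Complex.ofReal_ne_zero.mpr hq0.ne'), one_pow]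
      linear_combination ((q : ℂ) ^ 4 * (q : ℂ) ^ (j * 4) - (q : ℂ) ^ 12 * (q : ℂ) ^ (j * 8)) * hinv
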